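/- Let α, β ∈ ℝ, a := e^{iα}/√2, b := e^{iβ}/√2, p := (0, a, b, 0), q := (0, a, −b, 0) ∈ ℂ⁴, and ρ := (1/2)·pp* + (1/2)·qq*. Let F_{AB} := diag(1, −1, −1, 1) and F_{AB'} = F_{A'B} = F_{A'B'} := diag(−1, 1, 1, −1). Then ρ is a density matrix (positive semidefinite with trace 1) and Tr(ρ · (F_{AB'} + F_{A'B} + F_{A'B'} − F_{AB})) = 4; that is, this mixed state maximally violates the CHSH inequality, with value 4. -/

import Mathlib

open scoped InnerProductSpace
open Matrix

noncomputable section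

/-- `ℂ²` as a Hilbert space. -/
abbrev C2 : Type := EuclideanSpace ℂ (Fin 2)

/-- `ℂ⁴` as a Hilbert space. -/
abbrev C4 : Type := EuclideanSpace ℂ (Fin 4)

/-- Kronecker product of vectors: `(x ⊗ y)_(2i+j) = xᵢ · yⱼ`. -/
def vKron (x y : C2) : C4 :=
  (WithLp.equiv 2 (Fin 4 → ℂ)).symm fun k =>
    x (⟨k.val / 2, by omega⟩ : Fin 2) * y (⟨k.val % 2, by omega⟩ : Fin 2)

/-- Kronecker product of 2×2 matrices as a 4×4 matrix. -/
def mKron (M N : Matrix (Fin 2) (Fin 2) ℂ) : Matrix (Fin 4) (Fin 4) ℂ :=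
  Matrix.of fun i j =>
    M (⟨i.val / 2, by omega⟩ : Fin 2) (⟨j.val / 2, by omega⟩ : Fin 2) *
      N (⟨i.val % 2, by omega⟩ : Fin 2) (⟨j.val % 2, by omega⟩ : Fin 2)

/-- The rank-one matrix `u · uᴴ` (`uu*`). -/
def rankOne {n : ℕ} (u : EuclideanSpace ℂ (Fin n)) : Matrix (Fin n) (Fin n) ℂ :=
  Matrix.of fun i j => u i * star (u j)

/-- The vector `(a, b, c, d) ∈ ℂ⁴`. -/
def vec4 (a b c d : ℂ) : C4 :=
  (WithLp.equiv 2 (Fin 4 → ℂ)).symm ![a, b, c, d]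

open scoped ComplexOrder

lemma rankOne_psd {n : ℕ} (u : EuclideanSpace ℂ (Fin n)) : (rankOne u).PosSemidef := by
  have h := Matrix.posSemidef_self_mul_conjTranspose
    (Matrix.of (fun i (_ : Fin 1) => u i) : Matrix (Fin n) (Fin 1) ℂ)
  convert h using 1
  ext i j
  simp [rankOne, Matrix.mul_apply, Matrix.conjTranspose_apply]

lemma psd_smul_half {n : ℕ} {M : Matrix (Fin n) (Fin n) ℂ} (h : M.PosSemidef) :
    ((1/2:ℂ) • M).PosSemidef := by
  rw [Matrix.posSemidef_iff_dotProduct_mulVec]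
  constructor
  · unfold Matrix.IsHermitian
    rw [Matrix.conjTranspose_smul, h.1.eq]
    norm_num
  · intro x
    rw [Matrix.smul_mulVec, dotProduct_smul]
    exact smul_nonneg (by norm_num [Complex.le_def]) (h.dotProduct_mulVec_nonneg x)

lemma expsqr (α : ℝ) : (Complex.exp (α * Complex.I) / Real.sqrt 2) *
    star (Complex.exp (α * Complex.I) / Real.sqrt 2) = 1/2 := by
  rw [Complex.star_def, Complex.mul_conj, Complex.normSq_eq_norm_sq]
  rw [norm_div, Complex.norm_exp_ofReal_mul_I, Complex.norm_real,
    Real.norm_of_nonneg (Real.sqrt_nonneg 2)]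
  norm_num

/-- The nonlocal box model: the mixed state `ρ = ½pp* + ½qq*`, with `p = (0,a,b,0)`,
`q = (0,a,−b,0)`, `a = e^{iα}/√2`, `b = e^{iβ}/√2`, is a density matrix, and with
`F_{AB} = diag(1,−1,−1,1)` and `F_{AB'} = F_{A'B} = F_{A'B'} = diag(−1,1,1,−1)` it
maximally violates the CHSH inequality: `Tr(ρ·(F_{AB'} + F_{A'B} + F_{A'B'} − F_{AB})) = 4`. -/
theorem stmt_13 (α β : ℝ) (a b : ℂ)
    (ha : a = Complex.exp (α * Complex.I) / Real.sqrt 2)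
    (hb : b = Complex.exp (β * Complex.I) / Real.sqrt 2)
    (p q : C4) (hp : p = vec4 0 a b 0) (hq : q = vec4 0 a (-b) 0)
    (ρ : Matrix (Fin 4) (Fin 4) ℂ)
    (hρ : ρ = (1 / 2 : ℂ) • rankOne p + (1 / 2 : ℂ) • rankOne q)
    (FAB FAB' FA'B FA'B' : Matrix (Fin 4) (Fin 4) ℂ)
    (hFAB : FAB = Matrix.diagonal ![1, -1, -1, 1])
    (hFAB' : FAB' = Matrix.diagonal ![-1, 1, 1, -1])
    (hFA'B : FA'B = Matrix.diagonal ![-1, 1, 1, -1])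
    (hFA'B' : FA'B' = Matrix.diagonal ![-1, 1, 1, -1]) :
    ρ.PosSemidef ∧ ρ.trace = 1 ∧
      Matrix.trace (ρ * (FAB' + FA'B + FA'B' - FAB)) = 4 := by
  have haa : a * star a = 1/2 := by rw [ha]; exact expsqr α
  have hbb : b * star b = 1/2 := by rw [hb]; exact expsqr β
  refine ⟨?_, ?_, ?_⟩
  · rw [hρ]
    exact (psd_smul_half (rankOne_psd p)).add (psd_smul_half (rankOne_psd q))
  · subst hρ hp hq
    simp only [Matrix.trace, Matrix.diag, Fin.sum_univ_four, Matrix.add_apply,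
      Matrix.smul_apply, rankOne, vec4, Matrix.of_apply]
    simp only [WithLp.equiv_symm_apply, PiLp.toLp_apply]
    simp only [Matrix.cons_val]
    norm_num [Matrix.cons_val_zero, Matrix.cons_val_one]
    simp only [Complex.star_def] at haa hbb ⊢
    rw [haa, hbb]; norm_num
  · subst hρ hp hq hFAB hFAB' hFA'B hFA'B'
    simp only [Matrix.trace, Matrix.diag, Fin.sum_univ_four, Matrix.mul_apply,
      Matrix.add_apply, Matrix.sub_apply, Matrix.smul_apply, rankOne, vec4,
      Matrix.of_apply, Matrix.diagonal_apply]
    simp only [WithLp.equiv_symm_apply, PiLp.toLp_apply, Fin.sum_univ_four]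
    simp only [Matrix.cons_val]
    norm_num [Fin.ext_iff, Matrix.cons_val_zero, Matrix.cons_val_one]
    simp only [Complex.star_def] at haa hbb ⊢
    rw [haa, hbb]; norm_num
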